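/- Propagation of Hölder exponents through the delay recursion: Let γ ∈ (0,1), h ∈ (0,1], δ ∈ (0,1], and suppose nonnegative reals E_0, E_1, …, E_n satisfy E_0 ≤ C(h^{1/2} + δ^γ) and E_{j+1} ≤ C(E_j + h^{1/2} + δ + E_j^γ) for 0 ≤ j < n, for some C ≥ 1. Then there exist constants C_1,…,C_n ≥ 0 (depending only on C, γ, n) such that E_j ≤ C_j ( Σ_{ℓ=0}^{j} h^{γ^ℓ/2} + Σ_{ℓ=0}^{j+1} δ^{γ^ℓ} ) for all 1 ≤ j ≤ n. -/
import Mathlib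

lemma rpow_add_le_add_rpow_real {x y p : ℝ} (hx : 0 ≤ x) (hy : 0 ≤ y)
    (hp : 0 ≤ p) (hp1 : p ≤ 1) : (x + y) ^ p ≤ x ^ p + y ^ p := by
  lift x to NNReal using hx
  lift y to NNReal using hy
  have := NNReal.rpow_add_le_add_rpow x y hp hp1
  exact_mod_cast this

theorem holder_exponent_propagation
    (γ : ℝ) (hγ0 : 0 < γ) (hγ1 : γ < 1) (n : ℕ) (C : ℝ) (hC : 1 ≤ C) :
    ∃ Cs : ℕ → ℝ, (∀ j, 0 ≤ Cs j) ∧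
      ∀ h δ : ℝ, 0 < h → h ≤ 1 → 0 < δ → δ ≤ 1 →
      ∀ E : ℕ → ℝ, (∀ j, 0 ≤ E j) →
        E 0 ≤ C * (h ^ ((1 : ℝ) / 2) + δ ^ γ) →
        (∀ j, j < n → E (j + 1) ≤ C * (E j + h ^ ((1 : ℝ) / 2) + δ + E j ^ γ)) →
        ∀ j, 1 ≤ j → j ≤ n →
          E j ≤ Cs j *
            (∑ ℓ ∈ Finset.range (j + 1), h ^ (γ ^ ℓ / 2) +
             ∑ ℓ ∈ Finset.range (j + 2), δ ^ (γ ^ ℓ)) := by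
  set K : ℕ → ℝ := fun j => Nat.rec C (fun _ K => C * (2 * K + 2)) j with hKdef
  have hK0 : K 0 = C := rfl
  have hKs : ∀ j, K (j + 1) = C * (2 * K j + 2) := fun j => rfl
  have hK1 : ∀ j, 1 ≤ K j := by
    intro j
    induction j with
    | zero => simpa [hK0] using hC
    | succ j ih => rw [hKs]; nlinarith
  refine ⟨K, fun j => le_trans zero_le_one (hK1 j), ?_⟩
  intro h δ hh0 hh1 hδ0 hδ1 E hE hE0 hrec
  have hγℓpos : ∀ ℓ : ℕ, (0 : ℝ) < γ ^ ℓ := fun ℓ => pow_pos hγ0 ℓ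
  have hγℓle : ∀ ℓ : ℕ, γ ^ ℓ ≤ 1 := fun ℓ => pow_le_one₀ hγ0.le hγ1.le
  have key : ∀ j, j ≤ n → E j ≤ K j * (h ^ (γ ^ j / 2) + δ ^ (γ ^ (j + 1))) := by
    intro j
    induction j with
    | zero =>
      intro _
      simpa [hK0, pow_zero, pow_one] using hE0
    | succ j ih =>
      intro hjn
      have IH := ih (Nat.le_of_succ_le hjn)
      have hTpos : (0 : ℝ) < h ^ (γ ^ (j + 1) / 2) + δ ^ (γ ^ (j + 2)) := by
        have := Real.rpow_pos_of_pos hh0 (γ ^ (j + 1) / 2)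
        have := Real.rpow_pos_of_pos hδ0 (γ ^ (j + 2))
        linarith
      set T := h ^ (γ ^ (j + 1) / 2) + δ ^ (γ ^ (j + 2)) with hTdef
      have hmono : h ^ (γ ^ j / 2) ≤ h ^ (γ ^ (j + 1) / 2) := by
        apply Real.rpow_le_rpow_of_exponent_ge hh0 hh1
        have : γ ^ (j + 1) ≤ γ ^ j := pow_le_pow_of_le_one hγ0.le hγ1.le (Nat.le_succ j)
        linarith
      have hδmono : δ ^ (γ ^ (j + 1)) ≤ δ ^ (γ ^ (j + 2)) := by
        apply Real.rpow_le_rpow_of_exponent_ge hδ0 hδ1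
        exact pow_le_pow_of_le_one hγ0.le hγ1.le (Nat.le_succ _)
      have hTold : h ^ (γ ^ j / 2) + δ ^ (γ ^ (j + 1)) ≤ T := add_le_add hmono hδmono
      have h1 : E j ≤ K j * T := by
        refine IH.trans ?_
        exact mul_le_mul_of_nonneg_left hTold (le_trans zero_le_one (hK1 j))
      have h2 : h ^ ((1 : ℝ) / 2) ≤ T := by
        have : h ^ ((1 : ℝ) / 2) ≤ h ^ (γ ^ (j + 1) / 2) := by
          apply Real.rpow_le_rpow_of_exponent_ge hh0 hh1
          have := hγℓle (j + 1)
          linarith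
        have hδpos := (Real.rpow_pos_of_pos hδ0 (γ ^ (j + 2))).le
        rw [hTdef]; linarith
      have h3 : δ ≤ T := by
        have : δ ^ (1 : ℝ) ≤ δ ^ (γ ^ (j + 2)) := by
          apply Real.rpow_le_rpow_of_exponent_ge hδ0 hδ1
          exact hγℓle (j + 2)
        rw [Real.rpow_one] at this
        have hhpos := (Real.rpow_pos_of_pos hh0 (γ ^ (j + 1) / 2)).le
        rw [hTdef]; linarith
      have h4 : E j ^ γ ≤ K j * T := by
        have step1 : E j ^ γ ≤ (K j * (h ^ (γ ^ j / 2) + δ ^ (γ ^ (j + 1)))) ^ γ :=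
          Real.rpow_le_rpow (hE j) IH hγ0.le
        have step2 : (K j * (h ^ (γ ^ j / 2) + δ ^ (γ ^ (j + 1)))) ^ γ
            = K j ^ γ * (h ^ (γ ^ j / 2) + δ ^ (γ ^ (j + 1))) ^ γ := by
          apply Real.mul_rpow (le_trans zero_le_one (hK1 j))
          positivity
        have step3 : (h ^ (γ ^ j / 2) + δ ^ (γ ^ (j + 1))) ^ γ
            ≤ (h ^ (γ ^ j / 2)) ^ γ + (δ ^ (γ ^ (j + 1))) ^ γ := by
          apply rpow_add_le_add_rpow_real (by positivity) (by positivity) hγ0.le hγ1.le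
        have e1' : (h ^ (γ ^ j / 2)) ^ γ = h ^ (γ ^ (j + 1) / 2) := by
          rw [← Real.rpow_mul hh0.le]
          congr 1
          ring
        have e2 : (δ ^ (γ ^ (j + 1))) ^ γ = δ ^ (γ ^ (j + 2)) := by
          rw [← Real.rpow_mul hδ0.le]
          congr 1
        have hKγ : K j ^ γ ≤ K j := by
          have := Real.rpow_le_rpow_of_exponent_le (hK1 j) hγ1.le
          rwa [Real.rpow_one] at this
        calc E j ^ γ ≤ K j ^ γ * (h ^ (γ ^ j / 2) + δ ^ (γ ^ (j + 1))) ^ γ := by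
              rw [← step2]; exact step1
          _ ≤ K j ^ γ * ((h ^ (γ ^ j / 2)) ^ γ + (δ ^ (γ ^ (j + 1))) ^ γ) := by
              exact mul_le_mul_of_nonneg_left step3
                (Real.rpow_nonneg (le_trans zero_le_one (hK1 j)) γ)
          _ = K j ^ γ * T := by rw [e1', e2]
          _ ≤ K j * T := mul_le_mul_of_nonneg_right hKγ hTpos.le
      calc E (j + 1) ≤ C * (E j + h ^ ((1 : ℝ) / 2) + δ + E j ^ γ) := hrec j hjn
        _ ≤ C * (K j * T + T + T + K j * T) := by
            exact mul_le_mul_of_nonneg_left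
              (add_le_add (add_le_add (add_le_add h1 h2) h3) h4)
              (le_trans zero_le_one hC)
        _ = C * (2 * K j + 2) * T := by ring
        _ = K (j + 1) * T := by rw [hKs]
  intro j hj1 hjn
  have hkey := key j hjn
  refine hkey.trans ?_
  apply mul_le_mul_of_nonneg_left _ (le_trans zero_le_one (hK1 j))
  apply add_le_add
  · exact Finset.single_le_sum (f := fun ℓ => h ^ (γ ^ ℓ / 2))
      (fun ℓ _ => (Real.rpow_pos_of_pos hh0 _).le) (Finset.self_mem_range_succ j)
  · exact Finset.single_le_sum (f := fun ℓ => δ ^ (γ ^ ℓ))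
      (fun ℓ _ => (Real.rpow_pos_of_pos hδ0 _).le) (Finset.self_mem_range_succ (j + 1))
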